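/- Let H be a complex Hilbert space and let M and N be closed subspaces of H. Then c_e(M,N)² = inf{‖P_N P_M P_N − P_{M∩N} + K‖ : K a compact operator on H}; that is, the square of the distance of P_M P_N − P_{M∩N} to the compact operators equals the distance of P_N P_M P_N − P_{M∩N} to the compact operators. -/

import Mathlib

set_option maxHeartbeats 800000
set_option linter.unusedSectionVars false


/-- The orthogonal projection onto a subspace `K` of a complex inner product space,
as a bounded operator on the whole space (junk value `0` if `K` does not admit an
orthogonal projection; for a closed subspace of a Hilbert space it is the genuine
orthogonal projection). -/
noncomputable def proj {H : Type*} [NormedAddCommGroup H] [InnerProductSpace ℂ H]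
    (K : Submodule ℂ H) : H →L[ℂ] H :=
  letI := Classical.propDecidable (Submodule.HasOrthogonalProjection K)
  if h : Submodule.HasOrthogonalProjection K then
    haveI := h
    K.subtypeL.comp (Submodule.orthogonalProjection K)
  else 0

/-- The cosine of the essential Friedrichs angle between two (closed) subspaces `M`, `N`:
the infimum over compact operators `K` of `‖P_M P_N - P_{M ∩ N} + K‖`, i.e. the norm of
the class of `P_M P_N - P_{M ∩ N}` in the Calkin algebra. -/
noncomputable def essFriedrichs {H : Type*} [NormedAddCommGroup H] [InnerProductSpace ℂ H]
    (M N : Submodule ℂ H) : ℝ :=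
  ⨅ K : {T : H →L[ℂ] H // IsCompactOperator ⇑T},
    ‖proj M * proj N - proj (M ⊓ N) + (K : H →L[ℂ] H)‖


noncomputable section

open Metric ContinuousLinearMap

variable {H : Type*} [NormedAddCommGroup H] [InnerProductSpace ℂ H]

lemma proj_eq (K : Submodule ℂ H) [Submodule.HasOrthogonalProjection K] :
    proj K = K.subtypeL.comp (Submodule.orthogonalProjection K) := by
  unfold _root_.proj
  rw [dif_pos ‹_›]

lemma projApply (K : Submodule ℂ H) [Submodule.HasOrthogonalProjection K] (x : H) :
    proj K x = Submodule.orthogonalProjection K x := by rw [proj_eq]; rfl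

lemma proj_mem (K : Submodule ℂ H) [Submodule.HasOrthogonalProjection K] (x : H) :
    proj K x ∈ K := by rw [projApply]; exact (Submodule.orthogonalProjection K x).2

lemma projApply_of_mem (K : Submodule ℂ H) [Submodule.HasOrthogonalProjection K] {x : H}
    (hx : x ∈ K) : proj K x = x := by
  rw [projApply]
  exact congrArg Subtype.val (Submodule.orthogonalProjectionOnto_mem_subspace_eq_self (⟨x, hx⟩ : K))

lemma norm_projApply_le (K : Submodule ℂ H) [Submodule.HasOrthogonalProjection K] (x : H) :
    ‖proj K x‖ ≤ ‖x‖ := by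
  rw [projApply]
  calc ‖(Submodule.orthogonalProjection K x : H)‖ = ‖Submodule.orthogonalProjection K x‖ := rfl
    _ ≤ ‖Submodule.orthogonalProjection K‖ * ‖x‖ := (Submodule.orthogonalProjection K).le_opNorm x
    _ ≤ 1 * ‖x‖ := by
        gcongr
        exact Submodule.orthogonalProjectionOnto_norm_le K
    _ = ‖x‖ := one_mul _

lemma norm_proj_le (K : Submodule ℂ H) [Submodule.HasOrthogonalProjection K] : ‖proj K‖ ≤ 1 :=
  opNorm_le_bound _ zero_le_one (fun x => by rw [one_mul]; exact norm_projApply_le K x)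

lemma one_sub_proj (K : Submodule ℂ H) [Submodule.HasOrthogonalProjection K] :
    (1 : H →L[ℂ] H) - proj K = proj Kᗮ := by
  ext x
  have := Submodule.orthogonalProjectionOnto_orthogonal (K := K) x
  rw [projApply, this]
  simp [projApply]

lemma norm_one_sub_proj_le (K : Submodule ℂ H) [Submodule.HasOrthogonalProjection K] :
    ‖(1 : H →L[ℂ] H) - proj K‖ ≤ 1 := by
  rw [one_sub_proj]; exact norm_proj_le _

lemma star_proj [CompleteSpace H] (K : Submodule ℂ H) [CompleteSpace K] :
    star (proj K) = proj K := by
  rw [proj_eq]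
  exact isSelfAdjoint_starProjection K

lemma proj_mul_proj_of_le [CompleteSpace H] {K₁ K₂ : Submodule ℂ H}
    [Submodule.HasOrthogonalProjection K₁] [Submodule.HasOrthogonalProjection K₂] (h : K₁ ≤ K₂) :
    proj K₂ * proj K₁ = proj K₁ := by
  ext x
  exact projApply_of_mem K₂ (h (proj_mem K₁ x))

end

noncomputable section

open Metric ContinuousLinearMap

variable {H : Type*} [NormedAddCommGroup H] [InnerProductSpace ℂ H]

/-- distance to the compact operators -/
noncomputable def cdist (T : H →L[ℂ] H) : ℝ :=
  ⨅ K : {T : H →L[ℂ] H // IsCompactOperator ⇑T}, ‖T + (K : H →L[ℂ] H)‖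

instance : Nonempty {T : H →L[ℂ] H // IsCompactOperator ⇑T} :=
  ⟨0, by simp only [ContinuousLinearMap.coe_zero']; exact isCompactOperator_zero⟩

lemma cdist_nonneg (T : H →L[ℂ] H) : 0 ≤ cdist T :=
  le_ciInf fun _ => norm_nonneg _

lemma cdist_le (T : H →L[ℂ] H) {k : H →L[ℂ] H} (hk : IsCompactOperator ⇑k) :
    cdist T ≤ ‖T + k‖ :=
  by
  have hbdd : BddBelow (Set.range fun K : {S : H →L[ℂ] H // IsCompactOperator ⇑S} =>
      ‖T + (K : H →L[ℂ] H)‖) := by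
    refine ⟨0, ?_⟩
    rintro x ⟨K, rfl⟩
    exact norm_nonneg _
  exact ciInf_le hbdd ⟨k, hk⟩

lemma le_cdist {T : H →L[ℂ] H} {c : ℝ}
    (h : ∀ k : H →L[ℂ] H, IsCompactOperator ⇑k → c ≤ ‖T + k‖) : c ≤ cdist T :=
  le_ciInf fun K => h K.1 K.2

variable [CompleteSpace H]

lemma isCompactOperator_proj (F : Submodule ℂ H) [FiniteDimensional ℂ F] :
    IsCompactOperator ⇑(proj F) := by
  refine ⟨F.subtypeL '' Metric.closedBall 0 1, ?_, ?_⟩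
  · exact (isCompact_closedBall 0 1).image F.subtypeL.continuous
  · refine Filter.mem_of_superset (Metric.ball_mem_nhds 0 one_pos) ?_
    intro x hx
    refine ⟨Submodule.orthogonalProjection F x, ?_, (projApply F x).symm⟩
    rw [Metric.mem_closedBall, dist_zero_right]
    calc ‖Submodule.orthogonalProjection F x‖ = ‖proj F x‖ := by rw [projApply]; rfl
      _ ≤ ‖x‖ := norm_projApply_le F x
      _ ≤ 1 := le_of_lt (by simpa using hx)

lemma opNorm_le_of_closedBall {F : Type*} [NormedAddCommGroup F] [NormedSpace ℂ F]
    {f : H →L[ℂ] F} {C : ℝ} (hC : 0 ≤ C) (h : ∀ x : H, ‖x‖ ≤ 1 → ‖f x‖ ≤ C) :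
    ‖f‖ ≤ C := by
  refine f.opNorm_le_bound hC fun x => ?_
  rcases eq_or_ne x 0 with rfl | hx
  · simp
  · have hnx : (0 : ℝ) < ‖x‖ := norm_pos_iff.2 hx
    have hu : ‖((‖x‖ : ℂ)⁻¹ • x)‖ ≤ 1 := by
      rw [norm_smul, norm_inv, Complex.norm_real, Real.norm_eq_abs, abs_of_pos hnx,
        inv_mul_cancel₀ hnx.ne']
    have := h _ hu
    rw [map_smul, norm_smul, norm_inv, Complex.norm_real, Real.norm_eq_abs,
      abs_of_pos hnx] at this
    calc ‖f x‖ = ‖x‖ * (‖x‖⁻¹ * ‖f x‖) := by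
          rw [← mul_assoc, mul_inv_cancel₀ hnx.ne', one_mul]
      _ ≤ ‖x‖ * C := by gcongr
      _ = C * ‖x‖ := mul_comm _ _

/-- the net lemma : a compact operator is left-approximately finite rank -/
lemma exists_fd_proj {k : H →L[ℂ] H} (hk : IsCompactOperator ⇑k) {ε : ℝ} (hε : 0 < ε) :
    ∃ F : Submodule ℂ H, FiniteDimensional ℂ F ∧
      ‖((1 : H →L[ℂ] H) - proj F) * k‖ ≤ ε := by
  obtain ⟨C, hC, himg⟩ := hk.image_closedBall_subset_compact 1
  obtain ⟨t, htfin, htcov⟩ := totallyBounded_iff.1 hC.totallyBounded ε hε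
  refine ⟨Submodule.span ℂ t, FiniteDimensional.span_of_finite ℂ htfin, ?_⟩
  haveI : FiniteDimensional ℂ (Submodule.span ℂ t) := FiniteDimensional.span_of_finite ℂ htfin
  refine opNorm_le_of_closedBall hε.le fun x hx => ?_
  have hkx : k x ∈ C := himg ⟨x, by simpa [Metric.mem_closedBall, dist_zero_right] using hx, rfl⟩
  obtain ⟨y, hyt, hy⟩ := Set.mem_iUnion₂.1 (htcov hkx)
  have hyF : y ∈ Submodule.span ℂ t := Submodule.subset_span hyt
  have h1 : ((1 : H →L[ℂ] H) - proj (Submodule.span ℂ t)) y = 0 := by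
    simp [projApply_of_mem _ hyF]
  calc ‖(((1 : H →L[ℂ] H) - proj (Submodule.span ℂ t)) * k) x‖
      = ‖((1 : H →L[ℂ] H) - proj (Submodule.span ℂ t)) (k x - y)‖ := by
        rw [map_sub, h1, sub_zero]; rfl
    _ ≤ ‖(1 : H →L[ℂ] H) - proj (Submodule.span ℂ t)‖ * ‖k x - y‖ := le_opNorm _ _
    _ ≤ 1 * ε := by
        refine mul_le_mul (norm_one_sub_proj_le _) ?_ (norm_nonneg _) zero_le_one
        rw [← dist_eq_norm]
        exact le_of_lt (by simpa [Metric.mem_ball, dist_comm] using hy)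
    _ = ε := one_mul _

/-- Schauder's theorem in Hilbert space -/
lemma IsCompactOperator.star_clm {k : H →L[ℂ] H} (hk : IsCompactOperator ⇑k) :
    IsCompactOperator ⇑(star k) := by
  have hcl : IsClosed {f : H →L[ℂ] H | IsCompactOperator ⇑f} :=
    isClosed_setOf_isCompactOperator
  have : star k ∈ closure {f : H →L[ℂ] H | IsCompactOperator ⇑f} := by
    rw [Metric.mem_closure_iff]
    intro ε hε
    obtain ⟨F, hF, hnet⟩ := exists_fd_proj hk (half_pos hε)
    haveI := hF
    haveI : CompleteSpace F := FiniteDimensional.complete ℂ F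
    refine ⟨star k * proj F, ?_, ?_⟩
    · have h1 : IsCompactOperator (⇑(star k) ∘ ⇑(proj F)) :=
        (isCompactOperator_proj F).clm_comp (star k)
      exact h1
    · rw [dist_eq_norm]
      have : star k - star k * proj F = star (((1 : H →L[ℂ] H) - proj F) * k) := by
        rw [star_mul, star_sub, star_one, star_proj]
        noncomm_ring
      rw [this, norm_star]
      exact lt_of_le_of_lt hnet (half_lt_self hε)
  exact hcl.closure_subset this

end

noncomputable section

open Metric ContinuousLinearMap

variable {H : Type*} [NormedAddCommGroup H] [InnerProductSpace ℂ H] [CompleteSpace H]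

lemma cdist_star_mul_self_le (T : H →L[ℂ] H) : cdist (star T * T) ≤ cdist T ^ 2 := by
  have key : ∀ k : H →L[ℂ] H, IsCompactOperator ⇑k →
      cdist (star T * T) ≤ ‖T + k‖ ^ 2 := by
    intro k hk
    have h1 : IsCompactOperator ⇑(star T * k) := hk.clm_comp (star T)
    have h2 : IsCompactOperator ⇑(star k * T) := hk.star_clm.comp_clm T
    have h3 : IsCompactOperator ⇑(star k * k) := hk.star_clm.comp_clm k
    have hc : IsCompactOperator ⇑(star T * k + star k * T + star k * k) := by
      have := (h1.add h2).add h3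
      simpa using this
    have hdecomp : star (T + k) * (T + k) =
        star T * T + (star T * k + star k * T + star k * k) := by
      rw [star_add]; noncomm_ring
    calc cdist (star T * T) ≤ ‖star T * T + (star T * k + star k * T + star k * k)‖ :=
          cdist_le _ hc
      _ = ‖star (T + k) * (T + k)‖ := by rw [hdecomp]
      _ = ‖T + k‖ * ‖T + k‖ := CStarRing.norm_star_mul_self
      _ = ‖T + k‖ ^ 2 := (sq ‖T + k‖).symm
  have h0 : 0 ≤ cdist (star T * T) := cdist_nonneg _
  have hsqrt : Real.sqrt (cdist (star T * T)) ≤ cdist T := by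
    refine le_cdist fun k hk => ?_
    calc Real.sqrt (cdist (star T * T)) ≤ Real.sqrt (‖T + k‖ ^ 2) :=
          Real.sqrt_le_sqrt (key k hk)
      _ = ‖T + k‖ := Real.sqrt_sq (norm_nonneg _)
  calc cdist (star T * T) = Real.sqrt (cdist (star T * T)) ^ 2 := (Real.sq_sqrt h0).symm
    _ ≤ cdist T ^ 2 := pow_le_pow_left₀ (Real.sqrt_nonneg _) hsqrt 2

lemma sq_cdist_le (T : H →L[ℂ] H) : cdist T ^ 2 ≤ cdist (star T * T) := by
  refine le_cdist fun k hk => ?_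
  refine le_of_forall_pos_le_add fun ε hε => ?_
  obtain ⟨F, hF, hnet⟩ := exists_fd_proj hk hε
  haveI := hF
  haveI : CompleteSpace F := FiniteDimensional.complete ℂ F
  set p := proj F with hp
  have hps : star p = p := star_proj F
  have hTp : IsCompactOperator ⇑(-(T * p)) := by
    have : IsCompactOperator ⇑(T * p) := (isCompactOperator_proj F).clm_comp T
    simpa using this.neg
  have h1p : ‖(1 : H →L[ℂ] H) - p‖ ≤ 1 := norm_one_sub_proj_le F
  clear_value p
  have step1 : cdist T ≤ ‖T * (1 - p)‖ := by
    have he : T + -(T * p) = T * (1 - p) := by noncomm_ring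
    calc cdist T ≤ ‖T + -(T * p)‖ := cdist_le _ hTp
      _ = ‖T * (1 - p)‖ := by rw [he]
  have step2 : ‖T * (1 - p)‖ ^ 2 = ‖(1 - p) * (star T * T) * (1 - p)‖ := by
    have hstar : star (T * (1 - p)) = (1 - p) * star T := by
      rw [star_mul, star_sub, star_one, hps]
    calc ‖T * (1 - p)‖ ^ 2 = ‖T * (1 - p)‖ * ‖T * (1 - p)‖ := sq _
      _ = ‖star (T * (1 - p)) * (T * (1 - p))‖ := CStarRing.norm_star_mul_self.symm
      _ = ‖(1 - p) * (star T * T) * (1 - p)‖ := by rw [hstar]; noncomm_ring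
  have step3 : ‖(1 - p) * (star T * T) * (1 - p)‖ ≤ ‖star T * T + k‖ + ε := by
    have hdecomp : (1 - p) * (star T * T) * (1 - p) =
        (1 - p) * (star T * T + k) * (1 - p) - (1 - p) * k * (1 - p) := by
      noncomm_ring
    have hb1 : ‖(1 - p) * (star T * T + k) * (1 - p)‖ ≤ ‖star T * T + k‖ := by
      calc ‖(1 - p) * (star T * T + k) * (1 - p)‖
          ≤ ‖(1 - p) * (star T * T + k)‖ * ‖(1 : H →L[ℂ] H) - p‖ := norm_mul_le _ _
        _ ≤ ‖(1 - p) * (star T * T + k)‖ * 1 := by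
            gcongr
        _ = ‖(1 - p) * (star T * T + k)‖ := mul_one _
        _ ≤ ‖(1 : H →L[ℂ] H) - p‖ * ‖star T * T + k‖ := norm_mul_le _ _
        _ ≤ 1 * ‖star T * T + k‖ := by gcongr
        _ = ‖star T * T + k‖ := one_mul _
    have hb2 : ‖(1 - p) * k * (1 - p)‖ ≤ ε := by
      calc ‖(1 - p) * k * (1 - p)‖
          ≤ ‖(1 - p) * k‖ * ‖(1 : H →L[ℂ] H) - p‖ := norm_mul_le _ _
        _ ≤ ε * 1 := by
            apply mul_le_mul hnet h1p (norm_nonneg _) hε.le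
        _ = ε := mul_one _
    calc ‖(1 - p) * (star T * T) * (1 - p)‖
        = ‖(1 - p) * (star T * T + k) * (1 - p) - (1 - p) * k * (1 - p)‖ := by rw [hdecomp]
      _ ≤ ‖(1 - p) * (star T * T + k) * (1 - p)‖ + ‖(1 - p) * k * (1 - p)‖ := norm_sub_le _ _
      _ ≤ ‖star T * T + k‖ + ε := add_le_add hb1 hb2
  calc cdist T ^ 2 ≤ ‖T * (1 - p)‖ ^ 2 := pow_le_pow_left₀ (cdist_nonneg _) step1 2
    _ = ‖(1 - p) * (star T * T) * (1 - p)‖ := step2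
    _ ≤ ‖star T * T + k‖ + ε := step3

lemma cdist_sq (T : H →L[ℂ] H) : cdist T ^ 2 = cdist (star T * T) :=
  le_antisymm (sq_cdist_le T) (cdist_star_mul_self_le T)

end

noncomputable section

variable {H : Type*} [NormedAddCommGroup H] [InnerProductSpace ℂ H] [CompleteSpace H]

lemma proj_mul_proj_of_le' {K₁ K₂ : Submodule ℂ H} [CompleteSpace K₁]
    [CompleteSpace K₂] (h : K₁ ≤ K₂) : proj K₁ * proj K₂ = proj K₁ := by
  have h2 := congrArg star (proj_mul_proj_of_le h)
  rwa [star_mul, star_proj, star_proj] at h2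

theorem stmt3' (M N : Submodule ℂ H) (hM : IsClosed (M : Set H)) (hN : IsClosed (N : Set H)) :
    essFriedrichs M N ^ 2 =
      ⨅ K : {T : H →L[ℂ] H // IsCompactOperator ⇑T},
        ‖proj N * proj M * proj N - proj (M ⊓ N) + (K : H →L[ℂ] H)‖ := by
  haveI : CompleteSpace M := hM.completeSpace_coe
  haveI : CompleteSpace N := hN.completeSpace_coe
  haveI : CompleteSpace (M ⊓ N : Submodule ℂ H) := by
    have hcl : IsClosed ((M ⊓ N : Submodule ℂ H) : Set H) := by
      rw [Submodule.coe_inf]; exact hM.inter hN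
    exact hcl.completeSpace_coe
  have hPP : proj M * proj M = proj M := proj_mul_proj_of_le le_rfl
  have hPR : proj M * proj (M ⊓ N) = proj (M ⊓ N) := proj_mul_proj_of_le inf_le_left
  have hRP : proj (M ⊓ N) * proj M = proj (M ⊓ N) := proj_mul_proj_of_le' inf_le_left
  have hQR : proj N * proj (M ⊓ N) = proj (M ⊓ N) := proj_mul_proj_of_le inf_le_right
  have hRQ : proj (M ⊓ N) * proj N = proj (M ⊓ N) := proj_mul_proj_of_le' inf_le_right
  have hRR : proj (M ⊓ N) * proj (M ⊓ N) = proj (M ⊓ N) := proj_mul_proj_of_le le_rfl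
  have hstar : star (proj M * proj N - proj (M ⊓ N)) = proj N * proj M - proj (M ⊓ N) := by
    rw [star_sub, star_mul, star_proj, star_proj, star_proj]
  have halg : star (proj M * proj N - proj (M ⊓ N)) * (proj M * proj N - proj (M ⊓ N)) =
      proj N * proj M * proj N - proj (M ⊓ N) := by
    rw [hstar]
    have expand : (proj N * proj M - proj (M ⊓ N)) * (proj M * proj N - proj (M ⊓ N)) =
        proj N * (proj M * proj M) * proj N - proj N * (proj M * proj (M ⊓ N)) -
          proj (M ⊓ N) * proj M * proj N + proj (M ⊓ N) * proj (M ⊓ N) := by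
      noncomm_ring
    rw [expand, hPP, hPR, hQR, hRR, hRP, hRQ]
    abel
  calc essFriedrichs M N ^ 2 = cdist (proj M * proj N - proj (M ⊓ N)) ^ 2 := rfl
    _ = cdist (star (proj M * proj N - proj (M ⊓ N)) * (proj M * proj N - proj (M ⊓ N))) :=
        cdist_sq _
    _ = cdist (proj N * proj M * proj N - proj (M ⊓ N)) := by rw [halg]
    _ = ⨅ K : {T : H →L[ℂ] H // IsCompactOperator ⇑T},
        ‖proj N * proj M * proj N - proj (M ⊓ N) + (K : H →L[ℂ] H)‖ := rfl

end


theorem stmt3 {H : Type*} [NormedAddCommGroup H] [InnerProductSpace ℂ H] [CompleteSpace H]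
    (M N : Submodule ℂ H) (hM : IsClosed (M : Set H)) (hN : IsClosed (N : Set H)) :
    essFriedrichs M N ^ 2 =
      ⨅ K : {T : H →L[ℂ] H // IsCompactOperator ⇑T},
        ‖proj N * proj M * proj N - proj (M ⊓ N) + (K : H →L[ℂ] H)‖ :=
  stmt3' M N hM hN
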